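/- Let G be a finite group and φ an automorphism of G. If there exists an invertible element c of the complex group algebra ℂ[G] such that φ(g) = c·g·c⁻¹ in ℂ[G] for every g ∈ G, then φ is class-preserving, i.e. φ(g) is conjugate to g in G for every g ∈ G. -/

import Mathlib

/-!
STATEMENT 8: Let `G` be a finite group and `φ` an automorphism of `G`.  If
there is an invertible element `c` of the complex group algebra `ℂ[G]` with
`φ g = c * g * c⁻¹` in `ℂ[G]` for all `g ∈ G`, then `φ` is class-preserving:
`φ g` is conjugate to `g` in `G` for every `g`.
-/
theorem stmt8 (G : Type*) [Group G] [Fintype G] (φ : G ≃* G)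
    (c : (MonoidAlgebra ℂ G)ˣ)
    (hc : ∀ g : G, MonoidAlgebra.of ℂ G (φ g) =
        (c : MonoidAlgebra ℂ G) * MonoidAlgebra.of ℂ G g *
          ((c⁻¹ : (MonoidAlgebra ℂ G)ˣ) : MonoidAlgebra ℂ G)) :
    ∀ g : G, IsConj g (φ g) := by
  classical
  intro g
  set z : MonoidAlgebra ℂ G := ∑ h : G, MonoidAlgebra.of ℂ G (h * g * h⁻¹) with hz
  have hofz : ∀ x : G, MonoidAlgebra.of ℂ G x * z = z * MonoidAlgebra.of ℂ G x := by
    intro x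
    rw [hz, Finset.mul_sum, Finset.sum_mul]
    refine Fintype.sum_bijective (fun h => x * h) (Group.mulLeft_bijective x) _ _ ?_
    intro h
    rw [← map_mul, ← map_mul]
    congr 1
    group
  have hz_comm : ∀ a : MonoidAlgebra ℂ G, a * z = z * a := by
    intro a
    induction a using MonoidAlgebra.induction_on with
    | of x => exact hofz x
    | add f g hf hg => rw [add_mul, mul_add, hf, hg]
    | smul r f hf => rw [smul_mul_assoc, mul_smul_comm, hf]
  have key : z = ∑ h : G, MonoidAlgebra.of ℂ G (h * φ g * h⁻¹) := by
    calc z = ↑c * z * ↑c⁻¹ := by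
            rw [hz_comm (c : MonoidAlgebra ℂ G), mul_assoc, Units.mul_inv, mul_one]
      _ = ∑ h : G, ↑c * MonoidAlgebra.of ℂ G (h * g * h⁻¹) * ↑c⁻¹ := by
            rw [hz, Finset.mul_sum, Finset.sum_mul]
      _ = ∑ h : G, MonoidAlgebra.of ℂ G (φ (h * g * h⁻¹)) := by
            simp_rw [hc]
      _ = ∑ h : G, MonoidAlgebra.of ℂ G (h * φ g * h⁻¹) := by
            refine Fintype.sum_bijective φ φ.bijective _ _ ?_
            intro h
            simp [map_mul]
  have hcoeff := congrArg (fun f : MonoidAlgebra ℂ G => f.coeff (φ g)) key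
  simp only [hz, MonoidAlgebra.of_apply, MonoidAlgebra.coeff_sum, MonoidAlgebra.coeff_single] at hcoeff
  rw [Finsupp.finset_sum_apply, Finsupp.finset_sum_apply] at hcoeff
  simp only [Finsupp.single_apply, Finset.sum_boole] at hcoeff
  have hcard :
      (Finset.univ.filter fun h : G => h * g * h⁻¹ = φ g).card =
      (Finset.univ.filter fun h : G => h * φ g * h⁻¹ = φ g).card := by
    exact_mod_cast hcoeff
  have hpos : 0 < (Finset.univ.filter fun h : G => h * φ g * h⁻¹ = φ g).card := by
    refine Finset.card_pos.mpr ⟨1, ?_⟩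
    simp
  rw [← hcard] at hpos
  obtain ⟨h, hh⟩ := Finset.card_pos.mp hpos
  simp only [Finset.mem_filter] at hh
  exact isConj_iff.mpr ⟨h, hh.2⟩
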